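/- arXiv:1808.10321 — 2 statements merged into one kernel-verified Lean document; each statement's English description precedes it below -/
import Mathlib

section
/- Let L be the Niemeier lattice A_24, generated by the root lattice A_24 = {x ∈ ℤ^{25} : Σx_i = 0} and the glue vector g = (1/5^{20}, -4/5^5). Then w = (1^4, -1^4, 0^{17}) ∈ L has norm 8, is extremal, and the number of roots u ∈ L with u·w = -2 equals 16. -/
/-- The standard inner product on `ℚ^25`. -/
def qip (x y : Fin 25 → ℚ) : ℚ := ∑ i, x i * y i

/-- A rational vector with all coordinates integral. -/
def isIntVec (x : Fin 25 → ℚ) : Prop := ∀ i, ∃ m : ℤ, x i = (m : ℚ)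

/-- The root lattice `A_24` inside `ℚ^25`: integer vectors with coordinate sum zero. -/
def A24set : Set (Fin 25 → ℚ) := {x | isIntVec x ∧ (∑ i, x i) = 0}

/-- The glue vector `g = (1/5^20, -4/5^5)`. -/
def glueA24 : Fin 25 → ℚ := fun i => if i.val < 20 then 1 / 5 else -(4 / 5)

/-- The Niemeier lattice `A_24`. -/
def NiemeierA24 : AddSubgroup (Fin 25 → ℚ) :=
  AddSubgroup.closure (A24set ∪ {glueA24})

/-- The vector `w = (1^4, -1^4, 0^17)`. -/
def wA24 : Fin 25 → ℚ := fun i => if i.val < 4 then 1 else if i.val < 8 then -1 else 0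

/- ## Auxiliary lemmas -/

lemma sum_glue : ∑ i, glueA24 i = 0 := by simp [Fin.sum_univ_succ, glueA24]; norm_num

lemma sum_wA24 : ∑ i, wA24 i = 0 := by simp [Fin.sum_univ_succ, wA24]

lemma qip_wA24 : qip wA24 wA24 = 8 := by
  unfold qip; simp [Fin.sum_univ_succ, wA24]; norm_num

lemma mem_niemeier_iff (x : Fin 25 → ℚ) :
    x ∈ NiemeierA24 ↔ (∑ i, x i) = 0 ∧ ∃ k : ℤ, ∀ i, ∃ m : ℤ, x i = m + k / 5 := by
  constructor
  · intro hx
    induction hx using AddSubgroup.closure_induction with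
    | mem y hy =>
      rcases hy with hy | hy
      · exact ⟨hy.2, 0, fun i => by obtain ⟨m, hm⟩ := hy.1 i; exact ⟨m, by simp [hm]⟩⟩
      · rcases hy with rfl
        refine ⟨sum_glue, 1, fun i => ?_⟩
        by_cases h : (i : ℕ) < 20
        · exact ⟨0, by simp [glueA24, h]⟩
        · exact ⟨-1, by simp [glueA24, h]; norm_num⟩
    | zero => exact ⟨by simp, 0, fun i => ⟨0, by simp⟩⟩
    | add y z _ _ hy hz =>
      obtain ⟨hs1, k1, h1⟩ := hy
      obtain ⟨hs2, k2, h2⟩ := hz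
      refine ⟨by simp [Finset.sum_add_distrib, hs1, hs2], k1 + k2, fun i => ?_⟩
      obtain ⟨m1, hm1⟩ := h1 i; obtain ⟨m2, hm2⟩ := h2 i
      exact ⟨m1 + m2, by simp [hm1, hm2]; ring⟩
    | neg y _ hy =>
      obtain ⟨hs, k, h⟩ := hy
      refine ⟨by simp [hs], -k, fun i => ?_⟩
      obtain ⟨m, hm⟩ := h i
      exact ⟨-m, by simp [hm]; ring⟩
  · rintro ⟨hs, k, h⟩
    have hg : glueA24 ∈ NiemeierA24 :=
      AddSubgroup.subset_closure (Set.mem_union_right _ rfl)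
    have hz : x - k • glueA24 ∈ NiemeierA24 := by
      apply AddSubgroup.subset_closure
      apply Set.mem_union_left
      constructor
      · intro i
        obtain ⟨m, hm⟩ := h i
        by_cases hi : (i : ℕ) < 20
        · exact ⟨m, by simp [hm, glueA24, hi]; ring⟩
        · exact ⟨m + k, by simp [hm, glueA24, hi]; push_cast; ring⟩
      · simp [Finset.sum_sub_distrib, hs, ← Finset.mul_sum, sum_glue]
    have := AddSubgroup.add_mem _ hz (AddSubgroup.zsmul_mem _ hg k)
    simpa using this

lemma key (m a b c d : ℤ) (hb0 : 0 ≤ b) (hba : b ≤ a) (hd0 : 0 ≤ d) (hdc : d ≤ c) :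
    (0:ℚ) ≤ ((a:ℚ)*m+b)*((c:ℚ)*m+d) := by
  have H : (0:ℤ) ≤ (a*m+b)*(c*m+d) := by
    rcases le_or_gt 0 m with h | h
    · have h1 : 0 ≤ a * m := mul_nonneg (hb0.trans hba) h
      have h2 : 0 ≤ c * m := mul_nonneg (hd0.trans hdc) h
      exact mul_nonneg (by linarith) (by linarith)
    · have hm : m ≤ -1 := by omega
      have h1 : a * m ≤ a * (-1) := mul_le_mul_of_nonneg_left hm (hb0.trans hba)
      have h2 : c * m ≤ c * (-1) := mul_le_mul_of_nonneg_left hm (hd0.trans hdc)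
      nlinarith
  exact_mod_cast H

lemma sum_if8 (a b : ℚ) : ∑ i : Fin 25, (if (i:ℕ) < 8 then a else b) = 8*a + 17*b := by
  simp [Fin.sum_univ_succ]; ring

lemma norm_lb (k : ℤ) (hk0 : 0 ≤ k) (hk5 : k < 5) (v : Fin 25 → ℚ)
    (hs : ∑ i, v i = 0)
    (h : ∀ i, ∃ m : ℤ, v i = wA24 i + 2*m + 2*(k:ℚ)/5) :
    8 ≤ ∑ i, v i * v i := by
  interval_cases k
  · -- k = 0
    have hpt : ∀ i : Fin 25, (if (i:ℕ) < 8 then (1:ℚ) else 0) ≤ v i * v i := by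
      intro i
      obtain ⟨m, hm⟩ := h i
      by_cases h4 : (i:ℕ) < 4
      · simp only [wA24, h4, if_true] at hm
        simp only [if_pos (by omega : (i:ℕ) < 8)]
        have hk := key m 1 0 1 1 (by norm_num) (by norm_num) (by norm_num) (by norm_num)
        push_cast at hk hm
        rw [hm]; nlinarith [hk]
      · by_cases h8 : (i:ℕ) < 8
        · simp only [wA24, h4, h8, if_false, if_true] at hm
          simp only [if_pos h8]
          have hk := key (-m) 1 0 1 1 (by norm_num) (by norm_num) (by norm_num) (by norm_num)
          push_cast at hk hm
          rw [hm]; nlinarith [hk]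
        · simp only [if_neg h8]
          exact mul_self_nonneg _
    calc (8:ℚ) = ∑ i : Fin 25, (if (i:ℕ) < 8 then (1:ℚ) else 0) := by rw [sum_if8]; norm_num
    _ ≤ _ := Finset.sum_le_sum (fun i _ => hpt i)
  · -- k = 1
    have hpt : ∀ i : Fin 25, ((if (i:ℕ) < 8 then (-9/25 : ℚ) else 16/25) - 6/5 * v i) ≤ v i * v i := by
      intro i
      obtain ⟨m, hm⟩ := h i
      by_cases h8 : (i:ℕ) < 8
      · simp only [if_pos h8]; nlinarith [sq_nonneg (v i + 3/5)]
      · simp only [if_neg h8]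
        simp only [wA24, show ¬(i:ℕ) < 4 by omega, h8, if_false] at hm
        have hk := key m 1 0 1 1 (by norm_num) (by norm_num) (by norm_num) (by norm_num)
        push_cast at hk hm
        rw [hm]; nlinarith [hk]
    calc (8:ℚ) = ∑ i : Fin 25, ((if (i:ℕ) < 8 then (-9/25 : ℚ) else 16/25) - 6/5 * v i) := by
          rw [Finset.sum_sub_distrib, ← Finset.mul_sum, hs, sum_if8]; norm_num
    _ ≤ _ := Finset.sum_le_sum (fun i _ => hpt i)
  · -- k = 2
    have hpt : ∀ i : Fin 25, (if (i:ℕ) < 8 then (1/25:ℚ) else 16/25) ≤ v i * v i := by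
      intro i
      obtain ⟨m, hm⟩ := h i
      by_cases h4 : (i:ℕ) < 4
      · simp only [wA24, h4, if_true] at hm
        simp only [if_pos (by omega : (i:ℕ) < 8)]
        have hk := key m 5 4 1 1 (by norm_num) (by norm_num) (by norm_num) (by norm_num)
        push_cast at hk hm
        rw [hm]; nlinarith [hk]
      · by_cases h8 : (i:ℕ) < 8
        · simp only [wA24, h4, h8, if_false, if_true] at hm
          simp only [if_pos h8]
          have hk := key (-m) 1 0 5 1 (by norm_num) (by norm_num) (by norm_num) (by norm_num)
          push_cast at hk hm
          rw [hm]; nlinarith [hk]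
        · simp only [wA24, h4, h8, if_false] at hm
          simp only [if_neg h8]
          have hk := key m 1 0 5 4 (by norm_num) (by norm_num) (by norm_num) (by norm_num)
          push_cast at hk hm
          rw [hm]; nlinarith [hk]
    calc (8:ℚ) ≤ ∑ i : Fin 25, (if (i:ℕ) < 8 then (1/25:ℚ) else 16/25) := by rw [sum_if8]; norm_num
    _ ≤ _ := Finset.sum_le_sum (fun i _ => hpt i)
  · -- k = 3
    have hpt : ∀ i : Fin 25, (if (i:ℕ) < 8 then (1/25:ℚ) else 16/25) ≤ v i * v i := by
      intro i
      obtain ⟨m, hm⟩ := h i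
      by_cases h4 : (i:ℕ) < 4
      · simp only [wA24, h4, if_true] at hm
        simp only [if_pos (by omega : (i:ℕ) < 8)]
        have hk := key (m+1) 1 0 5 1 (by norm_num) (by norm_num) (by norm_num) (by norm_num)
        push_cast at hk hm
        rw [hm]; nlinarith [hk]
      · by_cases h8 : (i:ℕ) < 8
        · simp only [wA24, h4, h8, if_false, if_true] at hm
          simp only [if_pos h8]
          have hk := key m 1 0 5 1 (by norm_num) (by norm_num) (by norm_num) (by norm_num)
          push_cast at hk hm
          rw [hm]; nlinarith [hk]
        · simp only [wA24, h4, h8, if_false] at hm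
          simp only [if_neg h8]
          have hk := key m 5 1 1 1 (by norm_num) (by norm_num) (by norm_num) (by norm_num)
          push_cast at hk hm
          rw [hm]; nlinarith [hk]
    calc (8:ℚ) ≤ ∑ i : Fin 25, (if (i:ℕ) < 8 then (1/25:ℚ) else 16/25) := by rw [sum_if8]; norm_num
    _ ≤ _ := Finset.sum_le_sum (fun i _ => hpt i)
  · -- k = 4
    have hpt : ∀ i : Fin 25, ((if (i:ℕ) < 8 then (-9/25 : ℚ) else 16/25) + 6/5 * v i) ≤ v i * v i := by
      intro i
      obtain ⟨m, hm⟩ := h i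
      by_cases h8 : (i:ℕ) < 8
      · simp only [if_pos h8]; nlinarith [sq_nonneg (v i - 3/5)]
      · simp only [if_neg h8]
        simp only [wA24, show ¬(i:ℕ) < 4 by omega, h8, if_false] at hm
        have hk := key m 1 0 1 1 (by norm_num) (by norm_num) (by norm_num) (by norm_num)
        push_cast at hk hm
        rw [hm]; nlinarith [hk]
    calc (8:ℚ) = ∑ i : Fin 25, ((if (i:ℕ) < 8 then (-9/25 : ℚ) else 16/25) + 6/5 * v i) := by
          rw [Finset.sum_add_distrib, ← Finset.mul_sum, hs, sum_if8]; norm_num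
    _ ≤ _ := Finset.sum_le_sum (fun i _ => hpt i)

lemma key0 (m : ℤ) : (0:ℚ) ≤ ((m:ℚ))*((m:ℚ)+1) := by
  have H : (0:ℤ) ≤ m*(m+1) := by
    rcases le_or_gt 0 m with h | h
    · positivity
    · nlinarith
  exact_mod_cast H

lemma k_eq_zero (u : Fin 25 → ℚ) (k : ℤ) (hk0 : 0 ≤ k) (hk5 : k < 5)
    (h : ∀ i, ∃ m : ℤ, u i = m + (k:ℚ)/5) (hs : ∑ i, u i = 0)
    (h2 : ∑ i, u i * u i = 2) : k = 0 := by
  by_contra hne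
  have main : ∀ (c s : ℚ), (∀ i : Fin 25, c + s * u i ≤ u i * u i) → 2 < 25 * c → False := by
    intro c s hpt hc
    have : ∑ i : Fin 25, (c + s * u i) ≤ ∑ i, u i * u i := Finset.sum_le_sum (fun i _ => hpt i)
    rw [h2, Finset.sum_add_distrib, ← Finset.mul_sum, hs, Finset.sum_const] at this
    simp at this
    linarith
  interval_cases k
  · exact hne rfl
  · refine main (4/25) (-3/5) (fun i => ?_) (by norm_num)
    obtain ⟨m, hm⟩ := h i
    have hk := key0 m
    push_cast at hm
    rw [hm]; nlinarith [hk]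
  · refine main (6/25) (-1/5) (fun i => ?_) (by norm_num)
    obtain ⟨m, hm⟩ := h i
    have hk := key0 m
    push_cast at hm
    rw [hm]; nlinarith [hk]
  · refine main (6/25) (1/5) (fun i => ?_) (by norm_num)
    obtain ⟨m, hm⟩ := h i
    have hk := key0 m
    push_cast at hm
    rw [hm]; nlinarith [hk]
  · refine main (4/25) (3/5) (fun i => ?_) (by norm_num)
    obtain ⟨m, hm⟩ := h i
    have hk := key0 m
    push_cast at hm
    rw [hm]; nlinarith [hk]

/- ## Roots -/

def EE (a b : Fin 25) : Fin 25 → ℚ := fun i => if i = a then 1 else if i = b then -1 else 0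

lemma qip_EE (a b : Fin 25) (hab : a ≠ b) (y : Fin 25 → ℚ) : qip (EE a b) y = y a - y b := by
  unfold qip EE
  have h : ∀ i : Fin 25, (if i = a then (1:ℚ) else if i = b then -1 else 0) * y i
      = (if i = a then y i else 0) + (if i = b then -y i else 0) := by
    intro i
    by_cases h1 : i = a
    · subst h1; simp [hab]
    · by_cases h2 : i = b
      · subst h2; simp [h1]
      · simp [h1, h2]
  rw [Finset.sum_congr rfl (fun i _ => h i), Finset.sum_add_distrib,
    Finset.sum_ite_eq' Finset.univ a y, Finset.sum_ite_eq' Finset.univ b (fun i => -y i)]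
  simp only [Finset.mem_univ, if_true]
  ring

lemma sum_EE (a b : Fin 25) (hab : a ≠ b) : ∑ i, EE a b i = 0 := by
  have := qip_EE a b hab (fun _ => 1)
  unfold qip at this
  simpa using this

lemma EE_mem (a b : Fin 25) (hab : a ≠ b) : EE a b ∈ NiemeierA24 := by
  apply AddSubgroup.subset_closure
  apply Set.mem_union_left
  refine ⟨fun i => ?_, sum_EE a b hab⟩
  unfold EE
  split_ifs
  · exact ⟨1, by norm_num⟩
  · exact ⟨-1, by norm_num⟩
  · exact ⟨0, by norm_num⟩

lemma EE_apply_a (a b : Fin 25) : EE a b a = 1 := by simp [EE]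

lemma EE_apply_b (a b : Fin 25) (hab : a ≠ b) : EE a b b = -1 := by
  simp [EE, Ne.symm hab]

def rootVec (p : Fin 4 × Fin 4) : Fin 25 → ℚ :=
  EE ⟨4 + p.1.val, by have := p.1.2; omega⟩ ⟨p.2.val, by have := p.2.2; omega⟩

lemma root_set_eq :
    {u : Fin 25 → ℚ | u ∈ NiemeierA24 ∧ qip u u = 2 ∧ qip u wA24 = -2}
      = Set.range rootVec := by
  ext u
  simp only [Set.mem_setOf_eq, Set.mem_range]
  constructor
  · rintro ⟨hu, h2, hw⟩
    rw [mem_niemeier_iff] at hu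
    obtain ⟨hs, k, hk⟩ := hu
    have hdm : (5:ℚ) * ((k / 5 : ℤ):ℚ) + ((k % 5 : ℤ):ℚ) = (k:ℚ) := by
      exact_mod_cast congrArg (fun z : ℤ => (z : ℚ)) (Int.mul_ediv_add_emod k 5)
    have hmod : ∀ i, ∃ m : ℤ, u i = m + ((k % 5 : ℤ):ℚ)/5 := by
      intro i
      obtain ⟨m, hm⟩ := hk i
      refine ⟨m + k / 5, ?_⟩
      rw [hm]; push_cast; linarith
    have h2' : ∑ i, u i * u i = 2 := h2
    have hj0 : k % 5 = 0 :=
      k_eq_zero u (k % 5) (Int.emod_nonneg k (by norm_num)) (Int.emod_lt_of_pos k (by norm_num))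
        hmod hs h2'
    have hint : ∀ i, ∃ m : ℤ, u i = (m:ℚ) := by
      intro i
      obtain ⟨m, hm⟩ := hmod i
      rw [hj0] at hm
      exact ⟨m, by simpa using hm⟩
    choose n hn using hint
    have hsn : ∑ i, n i = 0 := by
      have : ((∑ i, n i : ℤ):ℚ) = 0 := by
        push_cast
        rw [← hs]
        exact Finset.sum_congr rfl (fun i _ => (hn i).symm)
      exact_mod_cast this
    have h2n : ∑ i, n i * n i = 2 := by
      have : ((∑ i, n i * n i : ℤ):ℚ) = 2 := by
        push_cast
        rw [← h2']
        exact Finset.sum_congr rfl (fun i _ => by rw [hn i])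
      exact_mod_cast this
    have hb : ∀ i, -1 ≤ n i ∧ n i ≤ 1 := by
      intro i
      have hle : n i * n i ≤ 2 := by
        have := Finset.single_le_sum (f := fun i => n i * n i)
          (fun j _ => mul_self_nonneg (n j)) (Finset.mem_univ i)
        simpa [h2n] using this
      constructor <;> nlinarith
    set P := Finset.univ.filter (fun i => n i = 1) with hP
    set N := Finset.univ.filter (fun i => n i = -1) with hN
    have hPc : (P.card:ℤ) = ∑ i, (if n i = 1 then (1:ℤ) else 0) := by
      rw [hP, Finset.card_filter]
      push_cast [apply_ite (fun x : ℕ => (x:ℤ))]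
      rfl
    have hNc : (N.card:ℤ) = ∑ i, (if n i = -1 then (1:ℤ) else 0) := by
      rw [hN, Finset.card_filter]
      push_cast [apply_ite (fun x : ℕ => (x:ℤ))]
      rfl
    have e1 : (P.card:ℤ) + N.card = 2 := by
      have hpt : ∀ i : Fin 25,
          (if n i = 1 then (1:ℤ) else 0) + (if n i = -1 then 1 else 0) = n i * n i := by
        intro i
        rcases hb i with ⟨hl, hr⟩
        have h3 : n i = -1 ∨ n i = 0 ∨ n i = 1 := by omega
        rcases h3 with h | h | h <;> rw [h] <;> norm_num
      rw [hPc, hNc, ← Finset.sum_add_distrib, Finset.sum_congr rfl (fun i _ => hpt i), h2n]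
    have e2 : (P.card:ℤ) - N.card = 0 := by
      have hpt : ∀ i : Fin 25,
          (if n i = 1 then (1:ℤ) else 0) - (if n i = -1 then 1 else 0) = n i := by
        intro i
        rcases hb i with ⟨hl, hr⟩
        have h3 : n i = -1 ∨ n i = 0 ∨ n i = 1 := by omega
        rcases h3 with h | h | h <;> rw [h] <;> norm_num
      rw [hPc, hNc, ← Finset.sum_sub_distrib, Finset.sum_congr rfl (fun i _ => hpt i), hsn]
    have hP1 : P.card = 1 := by omega
    have hN1 : N.card = 1 := by omega
    obtain ⟨p, hp⟩ := Finset.card_eq_one.mp hP1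
    obtain ⟨q, hq⟩ := Finset.card_eq_one.mp hN1
    have hnp : n p = 1 := by
      have hm : p ∈ P := by rw [hp]; exact Finset.mem_singleton_self p
      exact (Finset.mem_filter.mp hm).2
    have hnq : n q = -1 := by
      have hm : q ∈ N := by rw [hq]; exact Finset.mem_singleton_self q
      exact (Finset.mem_filter.mp hm).2
    have hpq : p ≠ q := fun h => by rw [h, hnq] at hnp; omega
    have hzero : ∀ i, i ≠ p → i ≠ q → n i = 0 := by
      intro i hip hiq
      have h1 : n i ≠ 1 := fun h => hip (by
        have : i ∈ P := Finset.mem_filter.mpr ⟨Finset.mem_univ i, h⟩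
        rwa [hp, Finset.mem_singleton] at this)
      have h2 : n i ≠ -1 := fun h => hiq (by
        have : i ∈ N := Finset.mem_filter.mpr ⟨Finset.mem_univ i, h⟩
        rwa [hq, Finset.mem_singleton] at this)
      rcases hb i with ⟨hl, hr⟩
      omega
    have hu_eq : u = EE p q := by
      funext i
      rw [hn i]
      unfold EE
      by_cases h1 : i = p
      · subst h1; simp [hnp]
      · by_cases h2 : i = q
        · subst h2; simp [h1, hnq]
        · simp [h1, h2, hzero i h1 h2]
    rw [hu_eq, qip_EE p q hpq] at hw
    have hrange : 4 ≤ (p:ℕ) ∧ (p:ℕ) < 8 ∧ (q:ℕ) < 4 := by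
      unfold wA24 at hw
      split_ifs at hw <;> norm_num at hw <;> omega
    obtain ⟨hp4, hp8, hq4⟩ := hrange
    refine ⟨(⟨(p:ℕ) - 4, by omega⟩, ⟨(q:ℕ), by omega⟩), ?_⟩
    rw [hu_eq]
    unfold rootVec
    funext i
    unfold EE
    simp only [Fin.ext_iff, Fin.val_mk]
    have h4 : 4 + ((p:ℕ) - 4) = (p:ℕ) := by omega
    rw [h4]
  · rintro ⟨p, rfl⟩
    unfold rootVec
    set a : Fin 25 := ⟨4 + p.1.val, by have := p.1.2; omega⟩ with ha
    set b : Fin 25 := ⟨p.2.val, by have := p.2.2; omega⟩ with hb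
    have hab : a ≠ b := by
      rw [ha, hb]
      simp only [ne_eq, Fin.mk.injEq]
      have := p.2.2
      omega
    refine ⟨EE_mem a b hab, ?_, ?_⟩
    · rw [qip_EE a b hab, EE_apply_a, EE_apply_b a b hab]
      norm_num
    · rw [qip_EE a b hab]
      have h1 : wA24 a = -1 := by
        simp only [wA24, ha]
        rw [if_neg (by omega), if_pos (by have := p.1.2; omega)]
      have h2 : wA24 b = 1 := by
        simp only [wA24, hb]
        rw [if_pos (by have := p.2.2; omega)]
      rw [h1, h2]; norm_num

lemma rootVec_inj : Function.Injective rootVec := by decide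

/-- `w = (1^4, -1^4, 0^17)` lies in the Niemeier lattice `A_24`,
has norm 8, is extremal, and the number of roots `u` with `u·w = -2` equals 16. -/
theorem niemeierA24_w :
    wA24 ∈ NiemeierA24 ∧
    qip wA24 wA24 = 8 ∧
    (∀ u ∈ NiemeierA24, qip wA24 wA24 ≤ qip (wA24 + 2 • u) (wA24 + 2 • u)) ∧
    Nat.card {u : Fin 25 → ℚ |
      u ∈ NiemeierA24 ∧ qip u u = 2 ∧ qip u wA24 = -2} = 16 := by
  refine ⟨?_, qip_wA24, ?_, ?_⟩
  · apply AddSubgroup.subset_closure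
    apply Set.mem_union_left
    refine ⟨fun i => ?_, sum_wA24⟩
    unfold wA24
    split_ifs
    · exact ⟨1, by norm_num⟩
    · exact ⟨-1, by norm_num⟩
    · exact ⟨0, by norm_num⟩
  · intro u hu
    rw [mem_niemeier_iff] at hu
    obtain ⟨hsu, k, hk⟩ := hu
    set v : Fin 25 → ℚ := fun i => wA24 i + 2 * u i with hv
    have hq : qip (wA24 + 2 • u) (wA24 + 2 • u) = ∑ i, v i * v i := by
      unfold qip
      refine Finset.sum_congr rfl (fun i _ => ?_)
      simp [hv]
    have hsv : ∑ i, v i = 0 := by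
      rw [hv]
      rw [Finset.sum_add_distrib, ← Finset.mul_sum, hsu, sum_wA24]
      ring
    have hdm : (5:ℚ) * ((k / 5 : ℤ):ℚ) + ((k % 5 : ℤ):ℚ) = (k:ℚ) := by
      exact_mod_cast congrArg (fun z : ℤ => (z : ℚ)) (Int.mul_ediv_add_emod k 5)
    have hvm : ∀ i, ∃ m : ℤ, v i = wA24 i + 2*m + 2*((k % 5 : ℤ):ℚ)/5 := by
      intro i
      obtain ⟨m, hm⟩ := hk i
      refine ⟨m + k / 5, ?_⟩
      rw [hv]
      simp only
      rw [hm]; push_cast; linarith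
    rw [qip_wA24, hq]
    exact norm_lb (k % 5) (Int.emod_nonneg k (by norm_num)) (Int.emod_lt_of_pos k (by norm_num))
      v hsv hvm
  · rw [root_set_eq, Nat.card_range_of_injective rootVec_inj]
    simp
end

section
/- In the Niemeier lattice A_24 with w = (1^4, -1^4, 0^{17}), the quantity η(L,w) = 1 + |S_2^w| + (1/2)|S_4^w| equals 1 + 16 + 35 = 52, which is not congruent to 0 modulo 8. -/
/-- `S_i^w = {u ∈ L : u·u = i = -u·w}`. -/
def SA24 (i : ℚ) : Set (Fin 25 → ℚ) :=
  {u | u ∈ NiemeierA24 ∧ qip u u = i ∧ qip u wA24 = -i}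

/-! ### Auxiliary set-up -/

namespace NA24aux

def first4 : Finset (Fin 25) := {0,1,2,3}
def mid4 : Finset (Fin 25) := {4,5,6,7}
def rest17 : Finset (Fin 25) := {8,9,10,11,12,13,14,15,16,17,18,19,20,21,22,23,24}

lemma mem_first4 : ∀ i : Fin 25, i ∈ first4 ↔ i.val < 4 := by decide
lemma mem_mid4 : ∀ i : Fin 25, i ∈ mid4 ↔ (4 ≤ i.val ∧ i.val < 8) := by decide
lemma mem_rest17 : ∀ i : Fin 25, i ∈ rest17 ↔ 8 ≤ i.val := by decide

lemma glue_sum : ∑ i, glueA24 i = 0 := by norm_num [Fin.sum_univ_succ, glueA24]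
lemma w_sum : ∑ i, wA24 i = 0 := by norm_num [Fin.sum_univ_succ, wA24]

lemma w_cases (i : Fin 25) : wA24 i = 1 ∨ wA24 i = -1 ∨ wA24 i = 0 := by
  unfold wA24; split_ifs <;> simp

lemma w_le_one (i : Fin 25) : wA24 i ≤ 1 := by
  rcases w_cases i with h | h | h <;> rw [h] <;> norm_num

lemma neg_one_le_w (i : Fin 25) : -1 ≤ wA24 i := by
  rcases w_cases i with h | h | h <;> rw [h] <;> norm_num

lemma w_of_first4 {i : Fin 25} (h : i ∈ first4) : wA24 i = 1 := by
  rw [mem_first4] at h; simp [wA24, h]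

lemma w_of_mid4 {i : Fin 25} (h : i ∈ mid4) : wA24 i = -1 := by
  rw [mem_mid4] at h
  simp [wA24, Nat.not_lt.mpr h.1, h.2, Nat.lt_of_lt_of_le (by norm_num : (0:ℕ) < 4) h.1]

lemma mem_mid4_of_w {i : Fin 25} (h : wA24 i = -1) : i ∈ mid4 := by
  rw [mem_mid4]
  unfold wA24 at h
  by_cases h1 : i.val < 4
  · rw [if_pos h1] at h; norm_num at h
  by_cases h2 : i.val < 8
  · omega
  · rw [if_neg h1, if_neg h2] at h; norm_num at h

lemma mem_first4_of_w {i : Fin 25} (h : wA24 i = 1) : i ∈ first4 := by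
  rw [mem_first4]
  unfold wA24 at h
  by_cases h1 : i.val < 4
  · exact h1
  · rw [if_neg h1] at h
    by_cases h2 : i.val < 8
    · rw [if_pos h2] at h; norm_num at h
    · rw [if_neg h2] at h; norm_num at h

/-! ### Structure of lattice elements -/

def GoodA24 : AddSubgroup (Fin 25 → ℚ) where
  carrier := {u | (∑ i, u i = 0) ∧ ∃ n : ℤ, ∃ m : Fin 25 → ℤ, ∀ i, u i = m i + n * glueA24 i}
  zero_mem' := ⟨by simp, 0, 0, by simp⟩
  add_mem' := by
    rintro a b ⟨sa, na, ma, ha⟩ ⟨sb, nb, mb, hb⟩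
    refine ⟨by simp [Pi.add_apply, Finset.sum_add_distrib, sa, sb], na + nb, ma + mb, fun i => ?_⟩
    simp only [Pi.add_apply, ha i, hb i]
    push_cast
    ring
  neg_mem' := by
    rintro a ⟨sa, na, ma, ha⟩
    refine ⟨by rw [show (∑ x : Fin 25, (-a) x) = -∑ x : Fin 25, a x by
      simp [Finset.sum_neg_distrib], sa, neg_zero], -na, -ma, fun i => ?_⟩
    simp only [Pi.neg_apply, ha i]
    push_cast
    ring

lemma niemeier_le_good : NiemeierA24 ≤ GoodA24 := by
  rw [NiemeierA24, AddSubgroup.closure_le]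
  rintro u (⟨hint, hsum⟩ | hg)
  · choose m hm using hint
    exact ⟨hsum, 0, m, fun i => by simp [hm i]⟩
  · rcases hg with rfl
    exact ⟨glue_sum, 1, 0, fun i => by simp⟩

lemma mem_niemeier_structure {u : Fin 25 → ℚ} (hu : u ∈ NiemeierA24) :
    (∑ i, u i = 0) ∧ ∃ r : ℕ, r < 5 ∧ ∃ m : Fin 25 → ℤ, ∀ i, u i = m i + (r : ℚ)/5 := by
  obtain ⟨hsum, n, m, hm⟩ := niemeier_le_good hu
  refine ⟨hsum, (n % 5).toNat, by omega,
    fun i => m i + (if i.val < 20 then n/5 else -4*(n/5) - n % 5), fun i => ?_⟩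
  have h5 : (n : ℚ) = 5 * ((n/5 : ℤ) : ℚ) + ((n % 5 : ℤ) : ℚ) := by
    exact_mod_cast (Int.mul_ediv_add_emod n 5).symm
  have hr : (((n % 5).toNat : ℕ) : ℚ) = ((n % 5 : ℤ) : ℚ) := by
    have : (0:ℤ) ≤ n % 5 := Int.emod_nonneg n (by norm_num)
    exact_mod_cast Int.toNat_of_nonneg this
  rw [hm i, glueA24]
  by_cases h : i.val < 20
  · simp only [if_pos h]
    push_cast [hr]
    rw [h5]; ring
  · simp only [if_neg h]
    push_cast [hr]
    rw [h5]; ring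

section sums
variable {u : Fin 25 → ℚ} {m : Fin 25 → ℤ} {r : ℕ}

lemma sum_m_eq (h : ∀ i, u i = m i + (r : ℚ)/5) (hsum : ∑ i, u i = 0) :
    ∑ i, m i = -(5 * (r:ℤ)) := by
  have hh : ∑ i, u i = (∑ i, (m i : ℚ)) + 25 * ((r:ℚ)/5) := by
    rw [Finset.sum_congr rfl (fun i _ => h i), Finset.sum_add_distrib]
    simp
  rw [hsum] at hh
  have h2 : (((∑ i, m i : ℤ)) : ℚ) = -(5 * (r:ℚ)) := by
    push_cast
    linarith [hh]
  exact_mod_cast h2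

lemma sum_msq_eq (h : ∀ i, u i = m i + (r : ℚ)/5) (hsum : ∑ i, u i = 0) {t : ℕ}
    (hq : qip u u = t) : ∑ i, (m i)^2 = t + (r:ℤ)^2 := by
  have hm := sum_m_eq h hsum
  have hh : qip u u = (∑ i, ((m i : ℚ))^2) + 2*((r:ℚ)/5) * (∑ i, (m i:ℚ)) + 25 * ((r:ℚ)/5)^2 := by
    rw [qip, Finset.sum_congr rfl (fun i _ => by rw [h i]; ring_nf :
      ∀ i ∈ Finset.univ, u i * u i = (m i:ℚ)^2 + 2*((r:ℚ)/5) * (m i:ℚ) + ((r:ℚ)/5)^2)]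
    rw [Finset.sum_add_distrib, Finset.sum_add_distrib, ← Finset.mul_sum]
    simp
  rw [hq] at hh
  have hmq : ((∑ i, m i : ℤ) : ℚ) = -(5*(r:ℚ)) := by exact_mod_cast hm
  push_cast at hmq
  have h2 : (((∑ i, (m i)^2 : ℤ)) : ℚ) = (t:ℚ) + (r:ℚ)^2 := by
    push_cast
    nlinarith [hh, hmq]
  exact_mod_cast h2

lemma qip_w_eq (h : ∀ i, u i = m i + (r : ℚ)/5) :
    qip u wA24 = ∑ i, (m i : ℚ) * wA24 i := by
  rw [qip, Finset.sum_congr rfl (fun i _ => by rw [h i]; ring :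
    ∀ i ∈ Finset.univ, u i * wA24 i = (m i:ℚ) * wA24 i + ((r:ℚ)/5) * wA24 i)]
  rw [Finset.sum_add_distrib, ← Finset.mul_sum, w_sum]
  ring

lemma sum_sq_ge_neg_sum : ∑ i, (m i)^2 ≥ -∑ i, m i := by
  rw [ge_iff_le, ← Finset.sum_neg_distrib]
  exact Finset.sum_le_sum (fun i _ => by nlinarith [sq_nonneg (m i + 1)])

lemma sum_eq_cards (hpm : ∀ i, m i = -1 ∨ m i = 0 ∨ m i = 1) :
    ∑ i, m i = ((Finset.univ.filter (fun i => m i = 1)).card : ℤ)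
      - ((Finset.univ.filter (fun i => m i = -1)).card : ℤ) := by
  have h : ∀ i ∈ Finset.univ,
      m i = (if m i = 1 then (1:ℤ) else 0) - (if m i = -1 then (1:ℤ) else 0) := by
    intro i _
    rcases hpm i with h | h | h <;> simp [h]
  rw [Finset.sum_congr rfl h, Finset.sum_sub_distrib]
  rw [Finset.sum_boole, Finset.sum_boole]

lemma sum_sq_eq_cards (hpm : ∀ i, m i = -1 ∨ m i = 0 ∨ m i = 1) :
    ∑ i, (m i)^2 = ((Finset.univ.filter (fun i => m i = 1)).card : ℤ)
      + ((Finset.univ.filter (fun i => m i = -1)).card : ℤ) := by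
  have h : ∀ i ∈ Finset.univ,
      (m i)^2 = (if m i = 1 then (1:ℤ) else 0) + (if m i = -1 then (1:ℤ) else 0) := by
    intro i _
    rcases hpm i with h | h | h <;> simp [h]
  rw [Finset.sum_congr rfl h, Finset.sum_add_distrib]
  rw [Finset.sum_boole, Finset.sum_boole]

lemma sum_neg_card (hpm : ∀ i, m i = -1 ∨ m i = 0) :
    ∑ i, m i = -((Finset.univ.filter (fun i => m i = -1)).card : ℤ) := by
  have h : ∀ i ∈ Finset.univ, m i = -(if m i = -1 then (1:ℤ) else 0) := by
    intro i _
    rcases hpm i with h | h <;> simp [h]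
  rw [Finset.sum_congr rfl h]
  rw [show (∑ x : Fin 25, -if m x = -1 then (1:ℤ) else 0)
      = -∑ x : Fin 25, if m x = -1 then (1:ℤ) else 0 by rw [Finset.sum_neg_distrib]]
  rw [Finset.sum_boole]

lemma sq_le_of_sum {t : ℤ} (hs : ∑ i, (m i)^2 = t) (i : Fin 25) : (m i)^2 ≤ t := by
  rw [← hs]
  exact Finset.single_le_sum (fun j _ => sq_nonneg (m j)) (Finset.mem_univ i)

lemma neg_or_zero_of_sums (hs : ∑ i, m i = -(5*(r:ℤ))) (hq : ∑ i, (m i)^2 = 5*(r:ℤ))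
    (i : Fin 25) : m i = -1 ∨ m i = 0 := by
  have h0 : ∑ i, ((m i)^2 + m i) = 0 := by rw [Finset.sum_add_distrib, hs, hq]; ring
  have := (Finset.sum_eq_zero_iff_of_nonneg
    (fun j _ => by nlinarith [sq_nonneg (m j + 1)] :
      ∀ j ∈ Finset.univ, 0 ≤ (m j)^2 + m j)).mp h0 i (Finset.mem_univ i)
  have h1 : m i * (m i + 1) = 0 := by nlinarith [this]
  rcases mul_eq_zero.mp h1 with h | h
  · right; exact h
  · left; omega

lemma small_of_sums (hs : ∑ i, m i = 0) (hq : ∑ i, (m i)^2 = 4)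
    (i : Fin 25) : m i = -1 ∨ m i = 0 ∨ m i = 1 := by
  have hb := sq_le_of_sum hq i
  have h1 : -2 ≤ m i := by nlinarith
  have h2 : m i ≤ 2 := by nlinarith
  by_contra hc
  push_neg at hc
  have h4 : (m i)^2 = 4 := by
    have : m i = -2 ∨ m i = 2 := by omega
    rcases this with h | h <;> rw [h] <;> ring
  have herase : ∑ j ∈ Finset.univ.erase i, (m j)^2 = 0 := by
    have := Finset.add_sum_erase Finset.univ (fun j => (m j)^2) (Finset.mem_univ i)
    omega
  have hz : ∀ j ∈ Finset.univ.erase i, (m j)^2 = 0 :=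
    (Finset.sum_eq_zero_iff_of_nonneg (fun j _ => sq_nonneg (m j))).mp herase
  have hsum' : ∑ j, m j = m i := by
    rw [← Finset.add_sum_erase Finset.univ m (Finset.mem_univ i),
      Finset.sum_eq_zero (fun j hj => by nlinarith [hz j hj])]
    ring
  omega

end sums

/-! ### The candidate finite sets -/

def g2 (p : Fin 25 × Fin 25) : Fin 25 → ℚ := fun k => if k = p.2 then 1 else if k = p.1 then -1 else 0
def gA (p : Finset (Fin 25) × Finset (Fin 25)) : Fin 25 → ℚ :=
  fun k => if k ∈ p.2 then 1 else if k ∈ p.1 then -1 else 0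
def gB (j : Fin 25) : Fin 25 → ℚ := fun k => if k.val < 4 ∨ k = j then -(4/5) else 1/5
def gC (j : Fin 25) : Fin 25 → ℚ := fun k => if (4 ≤ k.val ∧ k.val < 8) ∨ k = j then 4/5 else -(1/5)

def IA : Finset (Finset (Fin 25) × Finset (Fin 25)) :=
  (first4.powerset ×ˢ mid4.powerset).filter (fun p => p.1.card = 2 ∧ p.2.card = 2)

def F2 : Finset (Fin 25 → ℚ) := (first4 ×ˢ mid4).image g2
def F4 : Finset (Fin 25 → ℚ) := (IA.image gA ∪ rest17.image gB) ∪ rest17.image gC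

end NA24aux
namespace NA24aux

lemma int_mem_niemeier {u : Fin 25 → ℚ} (hint : isIntVec u) (hsum : ∑ i, u i = 0) :
    u ∈ NiemeierA24 :=
  AddSubgroup.subset_closure (Or.inl ⟨hint, hsum⟩)

lemma glue_mem : glueA24 ∈ NiemeierA24 :=
  AddSubgroup.subset_closure (Or.inr rfl)

/-- g2 : vectors with a `-1` at `p.1 ∈ first4` and `+1` at `p.2 ∈ mid4`. -/
lemma g2_spec {p : Fin 25 × Fin 25} (hp : p ∈ first4 ×ˢ mid4) : g2 p ∈ SA24 2 := by
  rw [Finset.mem_product] at hp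
  obtain ⟨h1, h2⟩ := hp
  have hv1 := (mem_first4 p.1).mp h1
  have hv2 := (mem_mid4 p.2).mp h2
  have hne : p.1 ≠ p.2 := by
    intro h; rw [h] at hv1; omega
  have hne' : p.2 ≠ p.1 := fun h => hne h.symm
  have hw1 : wA24 p.1 = 1 := w_of_first4 h1
  have hw2 : wA24 p.2 = -1 := w_of_mid4 h2
  refine ⟨?_, ?_, ?_⟩
  · apply int_mem_niemeier
    · intro k
      unfold g2
      split_ifs
      · exact ⟨1, by norm_num⟩
      · exact ⟨-1, by norm_num⟩
      · exact ⟨0, by norm_num⟩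
    · have hpt : ∀ k ∈ Finset.univ, g2 p k =
          (if k = p.2 then (1:ℚ) else 0) - (if k = p.1 then (1:ℚ) else 0) := by
        intro k _
        unfold g2
        by_cases hk2 : k = p.2
        · simp [hk2, hne']
        · by_cases hk1 : k = p.1 <;> simp [hk1, hk2, hne]
      rw [Finset.sum_congr rfl hpt, Finset.sum_sub_distrib]
      simp
  · have hpt : ∀ k ∈ Finset.univ, g2 p k * g2 p k =
        (if k = p.2 then (1:ℚ) else 0) + (if k = p.1 then (1:ℚ) else 0) := by
      intro k _
      unfold g2
      by_cases hk2 : k = p.2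
      · simp [hk2, hne']
      · by_cases hk1 : k = p.1 <;> simp [hk1, hk2, hne]
    rw [qip, Finset.sum_congr rfl hpt, Finset.sum_add_distrib]
    simp
    norm_num
  · have hpt : ∀ k ∈ Finset.univ, g2 p k * wA24 k =
        (if k = p.2 then (-1:ℚ) else 0) + (if k = p.1 then (-1:ℚ) else 0) := by
      intro k _
      unfold g2
      by_cases hk2 : k = p.2
      · simp [hk2, hne', hw2]
      · by_cases hk1 : k = p.1 <;> simp [hk1, hk2, hne, hw1]
    rw [qip, Finset.sum_congr rfl hpt, Finset.sum_add_distrib]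
    simp
    norm_num

/-- gA : vectors with two `-1`s in `p.1 ⊆ first4` and two `+1`s in `p.2 ⊆ mid4`. -/
lemma gA_spec {p : Finset (Fin 25) × Finset (Fin 25)} (hp : p ∈ IA) : gA p ∈ SA24 4 := by
  rw [IA, Finset.mem_filter, Finset.mem_product, Finset.mem_powerset, Finset.mem_powerset] at hp
  obtain ⟨⟨hN, hP⟩, hcN, hcP⟩ := hp
  have hdisj : ∀ k, k ∈ p.2 → k ∉ p.1 := by
    intro k hk2 hk1
    have := (mem_first4 k).mp (hN hk1)
    have := (mem_mid4 k).mp (hP hk2)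
    omega
  refine ⟨?_, ?_, ?_⟩
  · apply int_mem_niemeier
    · intro k
      unfold gA
      split_ifs
      · exact ⟨1, by norm_num⟩
      · exact ⟨-1, by norm_num⟩
      · exact ⟨0, by norm_num⟩
    · have hpt : ∀ k ∈ Finset.univ, gA p k =
          (if k ∈ p.2 then (1:ℚ) else 0) - (if k ∈ p.1 then (1:ℚ) else 0) := by
        intro k _
        unfold gA
        by_cases hk2 : k ∈ p.2
        · simp [hk2, hdisj k hk2]
        · by_cases hk1 : k ∈ p.1 <;> simp [hk1, hk2]
      rw [Finset.sum_congr rfl hpt, Finset.sum_sub_distrib]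
      simp [Finset.sum_ite_mem, hcN, hcP]
  · have hpt : ∀ k ∈ Finset.univ, gA p k * gA p k =
        (if k ∈ p.2 then (1:ℚ) else 0) + (if k ∈ p.1 then (1:ℚ) else 0) := by
      intro k _
      unfold gA
      by_cases hk2 : k ∈ p.2
      · simp [hk2, hdisj k hk2]
      · by_cases hk1 : k ∈ p.1 <;> simp [hk1, hk2]
    rw [qip, Finset.sum_congr rfl hpt, Finset.sum_add_distrib]
    simp [Finset.sum_ite_mem, hcN, hcP]
    norm_num
  · have hpt : ∀ k ∈ Finset.univ, gA p k * wA24 k =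
        (if k ∈ p.2 then (-1:ℚ) else 0) + (if k ∈ p.1 then (-1:ℚ) else 0) := by
      intro k _
      unfold gA
      by_cases hk2 : k ∈ p.2
      · simp [hk2, hdisj k hk2, w_of_mid4 (hP hk2)]
      · by_cases hk1 : k ∈ p.1
        · simp [hk1, hk2, w_of_first4 (hN hk1)]
        · simp [hk1, hk2]
    rw [qip, Finset.sum_congr rfl hpt, Finset.sum_add_distrib]
    simp [Finset.sum_ite_mem, hcN, hcP]
    norm_num

end NA24aux
namespace NA24aux

lemma filterB {j : Fin 25} (hj : 8 ≤ j.val) :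
    Finset.univ.filter (fun k : Fin 25 => k.val < 4 ∨ k = j) = insert j first4 := by
  ext k
  simp only [Finset.mem_filter, Finset.mem_univ, true_and, Finset.mem_insert, mem_first4]
  tauto

lemma cardB {j : Fin 25} (hj : 8 ≤ j.val) :
    (Finset.univ.filter (fun k : Fin 25 => k.val < 4 ∨ k = j)).card = 5 := by
  rw [filterB hj, Finset.card_insert_of_notMem (fun h => by
    have := (mem_first4 j).mp h; omega)]
  rfl

lemma filterC {j : Fin 25} (hj : 8 ≤ j.val) :
    Finset.univ.filter (fun k : Fin 25 => (4 ≤ k.val ∧ k.val < 8) ∨ k = j) = insert j mid4 := by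
  ext k
  simp only [Finset.mem_filter, Finset.mem_univ, true_and, Finset.mem_insert, mem_mid4]
  tauto

lemma cardC {j : Fin 25} (hj : 8 ≤ j.val) :
    (Finset.univ.filter (fun k : Fin 25 => (4 ≤ k.val ∧ k.val < 8) ∨ k = j)).card = 5 := by
  rw [filterC hj, Finset.card_insert_of_notMem (fun h => by
    have := (mem_mid4 j).mp h; omega)]
  rfl

lemma sum_gB {j : Fin 25} (hj : 8 ≤ j.val) : ∑ k, gB j k = 0 := by
  have hpt : ∀ k ∈ Finset.univ, gB j k =
      1/5 - (if k.val < 4 ∨ k = j then (1:ℚ) else 0) := by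
    intro k _
    unfold gB
    split_ifs <;> norm_num
  rw [Finset.sum_congr rfl hpt, Finset.sum_sub_distrib, Finset.sum_boole]
  rw [show (Finset.filter (fun k : Fin 25 => ↑k < 4 ∨ k = j) Finset.univ).card = 5 from cardB hj]
  simp
  norm_num

lemma sum_gC {j : Fin 25} (hj : 8 ≤ j.val) : ∑ k, gC j k = 0 := by
  have hpt : ∀ k ∈ Finset.univ, gC j k =
      -(1/5) + (if (4 ≤ k.val ∧ k.val < 8) ∨ k = j then (1:ℚ) else 0) := by
    intro k _
    unfold gC
    split_ifs <;> norm_num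
  rw [Finset.sum_congr rfl hpt, Finset.sum_add_distrib, Finset.sum_boole]
  rw [show (Finset.filter (fun k : Fin 25 => (4 ≤ ↑k ∧ ↑k < 8) ∨ k = j) Finset.univ).card = 5
    from cardC hj]
  simp
  norm_num

lemma gB_spec {j : Fin 25} (hj : j ∈ rest17) : gB j ∈ SA24 4 := by
  have hjv := (mem_rest17 j).mp hj
  refine ⟨?_, ?_, ?_⟩
  · have hz : (fun k => gB j k - glueA24 k) ∈ NiemeierA24 := by
      apply int_mem_niemeier
      · intro k
        by_cases c1 : k.val < 4 ∨ k = j <;> by_cases c2 : k.val < 20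
        · exact ⟨-1, by simp only [gB, glueA24, if_pos c1, if_pos c2]; norm_num⟩
        · exact ⟨0, by simp only [gB, glueA24, if_pos c1, if_neg c2]; norm_num⟩
        · exact ⟨0, by simp only [gB, glueA24, if_neg c1, if_pos c2]; norm_num⟩
        · exact ⟨1, by simp only [gB, glueA24, if_neg c1, if_neg c2]; norm_num⟩
      · rw [Finset.sum_sub_distrib, sum_gB hjv, glue_sum]
        norm_num
    have heq : gB j = glueA24 + (fun k => gB j k - glueA24 k) := by
      funext k; simp
    rw [heq]
    exact AddSubgroup.add_mem _ glue_mem hz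
  · have hpt : ∀ k ∈ Finset.univ, gB j k * gB j k =
        1/25 + (3/5) * (if k.val < 4 ∨ k = j then (1:ℚ) else 0) := by
      intro k _
      unfold gB
      split_ifs <;> norm_num
    rw [qip, Finset.sum_congr rfl hpt, Finset.sum_add_distrib, ← Finset.mul_sum,
      Finset.sum_boole, cardB hjv]
    simp
    norm_num
  · have hpt : ∀ k ∈ Finset.univ, gB j k * wA24 k =
        if k.val < 4 then -(4/5) else if k.val < 8 then -(1/5) else (0:ℚ) := by
      intro k _
      unfold gB wA24
      by_cases c1 : k.val < 4
      · rw [if_pos (Or.inl c1), if_pos c1, if_pos c1]; norm_num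
      · have hkj : ¬ (k.val < 4 ∨ k = j) ∨ (k = j) := by tauto
        by_cases c2 : k.val < 8
        · have : ¬ k = j := fun h => by rw [h] at c2; omega
          rw [if_neg (by tauto : ¬(k.val < 4 ∨ k = j))]
          simp only [if_neg c1, if_pos c2]
          norm_num
        · rw [if_neg c1, if_neg c2, mul_zero]
          split_ifs <;> norm_num
    rw [qip, Finset.sum_congr rfl hpt]
    norm_num [Fin.sum_univ_succ]

lemma gC_spec {j : Fin 25} (hj : j ∈ rest17) : gC j ∈ SA24 4 := by
  have hjv := (mem_rest17 j).mp hj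
  refine ⟨?_, ?_, ?_⟩
  · have hz : (fun k => gC j k + glueA24 k) ∈ NiemeierA24 := by
      apply int_mem_niemeier
      · intro k
        by_cases c1 : (4 ≤ k.val ∧ k.val < 8) ∨ k = j <;> by_cases c2 : k.val < 20
        · exact ⟨1, by simp only [gC, glueA24, if_pos c1, if_pos c2]; norm_num⟩
        · exact ⟨0, by simp only [gC, glueA24, if_pos c1, if_neg c2]; norm_num⟩
        · exact ⟨0, by simp only [gC, glueA24, if_neg c1, if_pos c2]; norm_num⟩
        · exact ⟨-1, by simp only [gC, glueA24, if_neg c1, if_neg c2]; norm_num⟩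
      · rw [Finset.sum_add_distrib, sum_gC hjv, glue_sum]
        norm_num
    have heq : gC j = -glueA24 + (fun k => gC j k + glueA24 k) := by
      funext k; simp
    rw [heq]
    exact AddSubgroup.add_mem _ (AddSubgroup.neg_mem _ glue_mem) hz
  · have hpt : ∀ k ∈ Finset.univ, gC j k * gC j k =
        1/25 + (3/5) * (if (4 ≤ k.val ∧ k.val < 8) ∨ k = j then (1:ℚ) else 0) := by
      intro k _
      unfold gC
      split_ifs <;> norm_num
    rw [qip, Finset.sum_congr rfl hpt, Finset.sum_add_distrib, ← Finset.mul_sum,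
      Finset.sum_boole, cardC hjv]
    simp
    norm_num
  · have hpt : ∀ k ∈ Finset.univ, gC j k * wA24 k =
        if k.val < 4 then -(1/5) else if k.val < 8 then -(4/5) else (0:ℚ) := by
      intro k _
      unfold gC wA24
      by_cases c1 : k.val < 4
      · have hnj : ¬ k = j := fun h => by rw [h] at c1; omega
        rw [if_neg (by simp [hnj]; omega : ¬((4 ≤ k.val ∧ k.val < 8) ∨ k = j)),
          if_pos c1, if_pos c1]
        norm_num
      · by_cases c2 : k.val < 8
        · rw [if_pos (Or.inl ⟨Nat.le_of_not_lt c1, c2⟩)]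
          simp only [if_neg c1, if_pos c2]
          norm_num
        · rw [if_neg c1, if_neg c2, mul_zero]
          split_ifs <;> norm_num
    rw [qip, Finset.sum_congr rfl hpt]
    norm_num [Fin.sum_univ_succ]

end NA24aux
namespace NA24aux

section forward
variable {u : Fin 25 → ℚ} {m : Fin 25 → ℤ}

lemma small_of_sum_two (hsq : ∑ i, (m i)^2 = 2) (i : Fin 25) :
    m i = -1 ∨ m i = 0 ∨ m i = 1 := by
  have hb := sq_le_of_sum hsq i
  have h1 : -1 ≤ m i := by nlinarith
  have h2 : m i ≤ 1 := by nlinarith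
  omega

lemma w_first (i : Fin 25) (h : i.val < 4) : wA24 i = 1 := by simp [wA24, h]
lemma w_mid (i : Fin 25) (h1 : ¬ i.val < 4) (h2 : i.val < 8) : wA24 i = -1 := by
  simp [wA24, h1, h2]
lemma w_rest (i : Fin 25) (h2 : ¬ i.val < 8) : wA24 i = 0 := by
  have h1 : ¬ i.val < 4 := by omega
  simp [wA24, h1, h2]

/-- Case r = 0, norm 2. -/
lemma case2_r0 (hm : ∀ i, u i = m i) (hs : ∑ i, m i = 0) (hsq : ∑ i, (m i)^2 = 2)
    (hww : ∑ i, (m i : ℚ) * wA24 i = -2) :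
    ∃ p ∈ first4 ×ˢ mid4, g2 p = u := by
  have hpm := small_of_sum_two hsq
  have hcards := sum_eq_cards hpm
  have hcards2 := sum_sq_eq_cards hpm
  set P := Finset.univ.filter (fun i => m i = 1) with hPdef
  set N := Finset.univ.filter (fun i => m i = -1) with hNdef
  have e1 : (P.card:ℤ) - (N.card:ℤ) = 0 := by rw [← hcards]; exact hs
  have e2 : (P.card:ℤ) + (N.card:ℤ) = 2 := by rw [← hcards2]; exact hsq
  have hP1 : P.card = 1 := by omega
  have hN1 : N.card = 1 := by omega
  obtain ⟨a, ha⟩ := Finset.card_eq_one.mp hP1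
  obtain ⟨b, hb⟩ := Finset.card_eq_one.mp hN1
  have haP : a ∈ P := by rw [ha]; exact Finset.mem_singleton_self a
  have hbN : b ∈ N := by rw [hb]; exact Finset.mem_singleton_self b
  have hma : m a = 1 := (Finset.mem_filter.mp haP).2
  have hmb : m b = -1 := (Finset.mem_filter.mp hbN).2
  have hab : a ≠ b := fun h => by rw [h, hmb] at hma; omega
  have hzero : ∀ k, k ≠ a → k ≠ b → m k = 0 := by
    intro k hka hkb
    rcases hpm k with h | h | h
    · exfalso; apply hkb
      have : k ∈ N := Finset.mem_filter.mpr ⟨Finset.mem_univ k, h⟩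
      rw [hb] at this; exact Finset.mem_singleton.mp this
    · exact h
    · exfalso; apply hka
      have : k ∈ P := Finset.mem_filter.mpr ⟨Finset.mem_univ k, h⟩
      rw [ha] at this; exact Finset.mem_singleton.mp this
  have hsumab : ∑ i, (m i : ℚ) * wA24 i = (m a : ℚ) * wA24 a + (m b : ℚ) * wA24 b := by
    have hsp := Finset.sum_pair (f := fun i => (m i : ℚ) * wA24 i) hab
    rw [← hsp]
    apply (Finset.sum_subset (Finset.subset_univ _) _).symm
    intro x _ hx
    simp only [Finset.mem_insert, Finset.mem_singleton] at hx
    push_neg at hx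
    rw [hzero x hx.1 hx.2]
    norm_num
  rw [hsumab, hma, hmb] at hww
  push_cast at hww
  have hwa : wA24 a = -1 := by
    have := w_le_one a; have := neg_one_le_w a
    have := w_le_one b; have := neg_one_le_w b
    linarith
  have hwb : wA24 b = 1 := by
    have := w_le_one a; have := neg_one_le_w a
    have := w_le_one b; have := neg_one_le_w b
    linarith
  refine ⟨(b, a), Finset.mem_product.mpr ⟨mem_first4_of_w hwb, mem_mid4_of_w hwa⟩, ?_⟩
  funext k
  unfold g2
  simp only
  by_cases hka : k = a
  · rw [if_pos hka, hm k, hka, hma]; norm_num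
  · rw [if_neg hka]
    by_cases hkb : k = b
    · rw [if_pos hkb, hm k, hkb, hmb]; norm_num
    · rw [if_neg hkb, hm k, hzero k hka hkb]; norm_num

/-- Case r = 0, norm 4. -/
lemma case4_r0 (hm : ∀ i, u i = m i) (hs : ∑ i, m i = 0) (hsq : ∑ i, (m i)^2 = 4)
    (hww : ∑ i, (m i : ℚ) * wA24 i = -4) :
    ∃ p ∈ IA, gA p = u := by
  have hpm := small_of_sums hs hsq
  have hcards := sum_eq_cards hpm
  have hcards2 := sum_sq_eq_cards hpm
  set P := Finset.univ.filter (fun i => m i = 1) with hPdef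
  set N := Finset.univ.filter (fun i => m i = -1) with hNdef
  have e1 : (P.card:ℤ) - (N.card:ℤ) = 0 := by rw [← hcards]; exact hs
  have e2 : (P.card:ℤ) + (N.card:ℤ) = 4 := by rw [← hcards2]; exact hsq
  have hP2 : P.card = 2 := by omega
  have hN2 : N.card = 2 := by omega
  have hle : ∀ i ∈ Finset.univ,
      -((if m i = 1 then (1:ℚ) else 0) + (if m i = -1 then (1:ℚ) else 0)) ≤ (m i : ℚ) * wA24 i := by
    intro i _
    have h1 := w_le_one i; have h2 := neg_one_le_w i
    rcases hpm i with h | h | h <;> rw [h] <;> push_cast <;> simp <;> linarith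
  have hsumf : ∑ i, -((if m i = 1 then (1:ℚ) else 0) + (if m i = -1 then (1:ℚ) else 0)) = -4 := by
    rw [show (∑ i : Fin 25, -((if m i = 1 then (1:ℚ) else 0) + (if m i = -1 then (1:ℚ) else 0)))
        = -∑ i : Fin 25, ((if m i = 1 then (1:ℚ) else 0) + (if m i = -1 then (1:ℚ) else 0)) from
      Finset.sum_neg_distrib _, Finset.sum_add_distrib, Finset.sum_boole, Finset.sum_boole]
    rw [show (Finset.filter (fun i => m i = 1) Finset.univ).card = 2 from hP2,
      show (Finset.filter (fun i => m i = -1) Finset.univ).card = 2 from hN2]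
    norm_num
  have heqs := (Finset.sum_eq_sum_iff_of_le hle).mp (by rw [hww, hsumf])
  have hPw : ∀ i, m i = 1 → wA24 i = -1 := by
    intro i h
    have := heqs i (Finset.mem_univ i)
    rw [h] at this; push_cast at this; simp at this; linarith
  have hNw : ∀ i, m i = -1 → wA24 i = 1 := by
    intro i h
    have := heqs i (Finset.mem_univ i)
    rw [h] at this; push_cast at this; simp at this; linarith
  refine ⟨(N, P), ?_, ?_⟩
  · rw [IA, Finset.mem_filter, Finset.mem_product, Finset.mem_powerset, Finset.mem_powerset]
    refine ⟨⟨?_, ?_⟩, hN2, hP2⟩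
    · intro i hi
      exact mem_first4_of_w (hNw i (Finset.mem_filter.mp hi).2)
    · intro i hi
      exact mem_mid4_of_w (hPw i (Finset.mem_filter.mp hi).2)
  · funext k
    unfold gA
    simp only
    rcases hpm k with h | h | h
    · rw [if_neg (fun hk => by have := (Finset.mem_filter.mp hk).2; omega : k ∉ P),
        if_pos (Finset.mem_filter.mpr ⟨Finset.mem_univ k, h⟩), hm k, h]
      norm_num
    · rw [if_neg (fun hk => by have := (Finset.mem_filter.mp hk).2; omega : k ∉ P),
        if_neg (fun hk => by have := (Finset.mem_filter.mp hk).2; omega : k ∉ N), hm k, h]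
      norm_num
    · rw [if_pos (Finset.mem_filter.mpr ⟨Finset.mem_univ k, h⟩), hm k, h]
      norm_num

/-- Shared equality analysis for r = 1 and r = 4. -/
lemma shared_neg (hpm : ∀ i, m i = -1 ∨ m i = 0)
    (hww : ∑ i, (m i : ℚ) * wA24 i = -4) :
    (∀ i : Fin 25, i.val < 4 → m i = -1) ∧ (∀ i : Fin 25, 4 ≤ i.val → i.val < 8 → m i = 0) := by
  have hle : ∀ i ∈ Finset.univ,
      (if i.val < 4 then (-1:ℚ) else 0) ≤ (m i : ℚ) * wA24 i := by
    intro i _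
    by_cases h1 : i.val < 4
    · rw [if_pos h1, w_first i h1]
      rcases hpm i with h | h <;> rw [h] <;> norm_num
    · rw [if_neg h1]
      by_cases h2 : i.val < 8
      · rw [w_mid i h1 h2]
        rcases hpm i with h | h <;> rw [h] <;> norm_num
      · rw [w_rest i h2]
        norm_num
  have hsumf : ∑ i : Fin 25, (if i.val < 4 then (-1:ℚ) else 0) = -4 := by
    norm_num [Fin.sum_univ_succ]
  have heqs := (Finset.sum_eq_sum_iff_of_le hle).mp (by rw [hww, hsumf])
  constructor
  · intro i h1
    have := heqs i (Finset.mem_univ i)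
    rw [if_pos h1, w_first i h1] at this
    have : (m i : ℚ) = -1 := by linarith
    exact_mod_cast this
  · intro i h1 h2
    have := heqs i (Finset.mem_univ i)
    rw [if_neg (by omega), w_mid i (by omega) h2] at this
    have : (m i : ℚ) = 0 := by linarith
    exact_mod_cast this

/-- Case r = 1, norm 4. -/
lemma case4_r1 (hm : ∀ i, u i = m i + 1/5) (hs : ∑ i, m i = -5) (hsq : ∑ i, (m i)^2 = 5)
    (hww : ∑ i, (m i : ℚ) * wA24 i = -4) :
    ∃ j ∈ rest17, gB j = u := by
  have hpm : ∀ i, m i = -1 ∨ m i = 0 := by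
    intro i
    exact neg_or_zero_of_sums (r := 1) (by rw [hs]; norm_num) (by rw [hsq]; norm_num) i
  set N := Finset.univ.filter (fun i => m i = -1) with hNdef
  have hNc := sum_neg_card hpm
  have hN5 : N.card = 5 := by rw [hNc, ← hNdef] at hs; omega
  obtain ⟨hlow, hmid⟩ := shared_neg hpm hww
  have hsub : first4 ⊆ N := by
    intro i hi
    exact Finset.mem_filter.mpr ⟨Finset.mem_univ i, hlow i ((mem_first4 i).mp hi)⟩
  have hcs : (N \ first4).card = 1 := by
    rw [Finset.card_sdiff_of_subset hsub, hN5]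
    rfl
  obtain ⟨j, hj⟩ := Finset.card_eq_one.mp hcs
  have hjmem : j ∈ N \ first4 := hj ▸ Finset.mem_singleton_self j
  have hjN : j ∈ N := (Finset.mem_sdiff.mp hjmem).1
  have hjf : j ∉ first4 := (Finset.mem_sdiff.mp hjmem).2
  have hmj : m j = -1 := (Finset.mem_filter.mp hjN).2
  have hjv : 8 ≤ j.val := by
    by_contra hc
    have h4 : ¬ j.val < 4 := fun h => hjf ((mem_first4 j).mpr h)
    have := hmid j (by omega) (by omega)
    omega
  have hNeq : N = insert j first4 := by
    apply (Finset.eq_of_subset_of_card_le _ _).symm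
    · intro k hk
      rcases Finset.mem_insert.mp hk with h | h
      · rw [h]; exact hjN
      · exact hsub h
    · rw [hN5, Finset.card_insert_of_notMem hjf]
      rfl
  refine ⟨j, (mem_rest17 j).mpr hjv, ?_⟩
  funext k
  unfold gB
  by_cases hc : k.val < 4 ∨ k = j
  · rw [if_pos hc]
    have hkN : k ∈ N := by
      rcases hc with h | h
      · exact hsub ((mem_first4 k).mpr h)
      · rw [h]; exact hjN
    have : m k = -1 := (Finset.mem_filter.mp hkN).2
    rw [hm k, this]
    norm_num
  · rw [if_neg hc]
    push_neg at hc
    have hkN : k ∉ N := by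
      rw [hNeq]
      intro h
      rcases Finset.mem_insert.mp h with h | h
      · exact hc.2 h
      · have := (mem_first4 k).mp h
        omega
    have : m k = 0 := by
      rcases hpm k with h | h
      · exact absurd (Finset.mem_filter.mpr ⟨Finset.mem_univ k, h⟩) hkN
      · exact h
    rw [hm k, this]
    norm_num

/-- Case r = 4, norm 4. -/
lemma case4_r4 (hm : ∀ i, u i = m i + 4/5) (hs : ∑ i, m i = -20) (hsq : ∑ i, (m i)^2 = 20)
    (hww : ∑ i, (m i : ℚ) * wA24 i = -4) :
    ∃ j ∈ rest17, gC j = u := by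
  have hpm : ∀ i, m i = -1 ∨ m i = 0 := by
    intro i
    exact neg_or_zero_of_sums (r := 4) (by rw [hs]; norm_num) (by rw [hsq]; norm_num) i
  set N := Finset.univ.filter (fun i => m i = -1) with hNdef
  set P := Finset.univ.filter (fun i => m i = 0) with hPdef
  have hNc := sum_neg_card hpm
  have hN20 : N.card = 20 := by rw [hNc, ← hNdef] at hs; omega
  have hPN : P = Finset.univ \ N := by
    ext k
    simp only [hPdef, hNdef, Finset.mem_filter, Finset.mem_univ, true_and, Finset.mem_sdiff]
    rcases hpm k with h | h <;> rw [h] <;> norm_num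
  have hP5 : P.card = 5 := by
    rw [hPN, Finset.card_sdiff_of_subset (Finset.subset_univ N), hN20]
    rfl
  obtain ⟨hlow, hmid⟩ := shared_neg hpm hww
  have hsub : mid4 ⊆ P := by
    intro i hi
    have := (mem_mid4 i).mp hi
    exact Finset.mem_filter.mpr ⟨Finset.mem_univ i, hmid i this.1 this.2⟩
  have hcs : (P \ mid4).card = 1 := by
    rw [Finset.card_sdiff_of_subset hsub, hP5]
    rfl
  obtain ⟨j, hj⟩ := Finset.card_eq_one.mp hcs
  have hjmem : j ∈ P \ mid4 := hj ▸ Finset.mem_singleton_self j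
  have hjP : j ∈ P := (Finset.mem_sdiff.mp hjmem).1
  have hjf : j ∉ mid4 := (Finset.mem_sdiff.mp hjmem).2
  have hmj : m j = 0 := (Finset.mem_filter.mp hjP).2
  have hjv : 8 ≤ j.val := by
    by_contra hc
    have h4 : ¬ (4 ≤ j.val ∧ j.val < 8) := fun h => hjf ((mem_mid4 j).mpr h)
    have := hlow j (by omega)
    omega
  have hPeq : P = insert j mid4 := by
    apply (Finset.eq_of_subset_of_card_le _ _).symm
    · intro k hk
      rcases Finset.mem_insert.mp hk with h | h
      · rw [h]; exact hjP
      · exact hsub h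
    · rw [hP5, Finset.card_insert_of_notMem hjf]
      rfl
  refine ⟨j, (mem_rest17 j).mpr hjv, ?_⟩
  funext k
  unfold gC
  by_cases hc : (4 ≤ k.val ∧ k.val < 8) ∨ k = j
  · rw [if_pos hc]
    have hkP : k ∈ P := by
      rcases hc with h | h
      · exact hsub ((mem_mid4 k).mpr h)
      · rw [h]; exact hjP
    have : m k = 0 := (Finset.mem_filter.mp hkP).2
    rw [hm k, this]
    norm_num
  · rw [if_neg hc]
    push_neg at hc
    have hkP : k ∉ P := by
      rw [hPeq]
      intro h
      rcases Finset.mem_insert.mp h with h | h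
      · exact hc.2 h
      · have h48 := (mem_mid4 k).mp h
        have h8 := hc.1 h48.1
        omega
    have : m k = -1 := by
      rcases hpm k with h | h
      · exact h
      · exact absurd (Finset.mem_filter.mpr ⟨Finset.mem_univ k, h⟩) hkP
    rw [hm k, this]
    norm_num

end forward
end NA24aux
namespace NA24aux

lemma S2_eq : SA24 2 = ↑F2 := by
  ext u
  constructor
  · rintro ⟨hmem, hq, hw⟩
    obtain ⟨hsum, r, hr5, m, hm⟩ := mem_niemeier_structure hmem
    have hq' : qip u u = ((2:ℕ):ℚ) := by exact_mod_cast hq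
    have hsq := sum_msq_eq hm hsum hq'
    have hs := sum_m_eq hm hsum
    have hineq := sum_sq_ge_neg_sum (m := m)
    have hww := qip_w_eq hm
    rw [hww] at hw
    interval_cases r
    · have hm' : ∀ i, u i = m i := by intro i; rw [hm i]; norm_num
      norm_num at hsq hs
      norm_num at hw
      obtain ⟨p, hp, hgp⟩ := case2_r0 hm' hs hsq hw
      exact Finset.mem_coe.mpr (Finset.mem_image.mpr ⟨p, hp, hgp⟩)
    · exfalso; norm_num at hsq hs; linarith
    · exfalso; norm_num at hsq hs; linarith
    · exfalso; norm_num at hsq hs; linarith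
    · exfalso; norm_num at hsq hs; linarith
  · intro hu
    obtain ⟨p, hp, rfl⟩ := Finset.mem_image.mp (Finset.mem_coe.mp hu)
    exact g2_spec hp

lemma S4_eq : SA24 4 = ↑F4 := by
  ext u
  constructor
  · rintro ⟨hmem, hq, hw⟩
    obtain ⟨hsum, r, hr5, m, hm⟩ := mem_niemeier_structure hmem
    have hq' : qip u u = ((4:ℕ):ℚ) := by exact_mod_cast hq
    have hsq := sum_msq_eq hm hsum hq'
    have hs := sum_m_eq hm hsum
    have hineq := sum_sq_ge_neg_sum (m := m)
    have hww := qip_w_eq hm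
    rw [hww] at hw
    interval_cases r
    · have hm' : ∀ i, u i = m i := by intro i; rw [hm i]; norm_num
      norm_num at hsq hs hw
      obtain ⟨p, hp, hgp⟩ := case4_r0 hm' hs hsq hw
      exact Finset.mem_coe.mpr (Finset.mem_union.mpr (Or.inl (Finset.mem_union.mpr (Or.inl
        (Finset.mem_image.mpr ⟨p, hp, hgp⟩)))))
    · have hm' : ∀ i, u i = m i + 1/5 := by intro i; rw [hm i]; norm_num
      norm_num at hsq hs hw
      obtain ⟨j, hj, hgj⟩ := case4_r1 hm' hs hsq hw
      exact Finset.mem_coe.mpr (Finset.mem_union.mpr (Or.inl (Finset.mem_union.mpr (Or.inr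
        (Finset.mem_image.mpr ⟨j, hj, hgj⟩)))))
    · exfalso; norm_num at hsq hs; linarith
    · exfalso; norm_num at hsq hs; linarith
    · have hm' : ∀ i, u i = m i + 4/5 := by intro i; rw [hm i]; norm_num
      norm_num at hsq hs hw
      obtain ⟨j, hj, hgj⟩ := case4_r4 hm' hs hsq hw
      exact Finset.mem_coe.mpr (Finset.mem_union.mpr (Or.inr (Finset.mem_image.mpr ⟨j, hj, hgj⟩)))
  · intro hu
    rcases Finset.mem_union.mp (Finset.mem_coe.mp hu) with h | h
    · rcases Finset.mem_union.mp h with h | h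
      · obtain ⟨p, hp, rfl⟩ := Finset.mem_image.mp h
        exact gA_spec hp
      · obtain ⟨j, hj, rfl⟩ := Finset.mem_image.mp h
        exact gB_spec hj
    · obtain ⟨j, hj, rfl⟩ := Finset.mem_image.mp h
      exact gC_spec hj

/-! ### Injectivity and cardinalities -/

lemma g2_injOn : Set.InjOn g2 ↑(first4 ×ˢ mid4) := by
  intro p hp q hq h
  obtain ⟨hp1, hp2⟩ := Finset.mem_product.mp (Finset.mem_coe.mp hp)
  have hv1 := (mem_first4 p.1).mp hp1
  have hv2 := (mem_mid4 p.2).mp hp2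
  have hne : p.1 ≠ p.2 := fun hh => by rw [hh] at hv1; omega
  have e2 := congrFun h p.2
  simp only [g2, if_pos rfl, if_true] at e2
  have hq2 : p.2 = q.2 := by
    by_contra hc
    rw [if_neg hc] at e2
    by_cases hc1 : p.2 = q.1
    · rw [if_pos hc1] at e2; norm_num at e2
    · rw [if_neg hc1] at e2; norm_num at e2
  have e1 := congrFun h p.1
  simp only [g2] at e1
  rw [if_neg hne] at e1
  simp only [if_pos rfl, if_true] at e1
  have hq1 : p.1 = q.1 := by
    by_cases hc2 : p.1 = q.2
    · rw [if_pos hc2] at e1; norm_num at e1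
    · rw [if_neg hc2] at e1
      by_contra hc
      rw [if_neg hc] at e1; norm_num at e1
  exact Prod.ext hq1 hq2

lemma gA_one_iff {p : Finset (Fin 25) × Finset (Fin 25)} (hp : p ∈ IA) (k : Fin 25) :
    gA p k = 1 ↔ k ∈ p.2 := by
  rw [IA, Finset.mem_filter, Finset.mem_product, Finset.mem_powerset, Finset.mem_powerset] at hp
  obtain ⟨⟨hN, hP⟩, _, _⟩ := hp
  unfold gA
  by_cases hk2 : k ∈ p.2
  · simp [hk2]
  · rw [if_neg hk2]
    by_cases hk1 : k ∈ p.1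
    · rw [if_pos hk1]
      constructor
      · intro hh; norm_num at hh
      · intro hh; exact absurd hh hk2
    · rw [if_neg hk1]
      constructor
      · intro hh; norm_num at hh
      · intro hh; exact absurd hh hk2

lemma gA_neg_iff {p : Finset (Fin 25) × Finset (Fin 25)} (hp : p ∈ IA) (k : Fin 25) :
    gA p k = -1 ↔ k ∈ p.1 := by
  rw [IA, Finset.mem_filter, Finset.mem_product, Finset.mem_powerset, Finset.mem_powerset] at hp
  obtain ⟨⟨hN, hP⟩, _, _⟩ := hp
  have hdisj : ∀ j, j ∈ p.2 → j ∉ p.1 := by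
    intro j hj2 hj1
    have := (mem_first4 j).mp (hN hj1)
    have := (mem_mid4 j).mp (hP hj2)
    omega
  unfold gA
  by_cases hk2 : k ∈ p.2
  · rw [if_pos hk2]
    constructor
    · intro hh; norm_num at hh
    · intro hh; exact absurd hh (hdisj k hk2)
  · rw [if_neg hk2]
    by_cases hk1 : k ∈ p.1
    · simp [hk1]
    · rw [if_neg hk1]
      constructor
      · intro hh; norm_num at hh
      · intro hh; exact absurd hh hk1

lemma gA_injOn : Set.InjOn gA ↑IA := by
  intro p hp q hq h
  have hp' := Finset.mem_coe.mp hp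
  have hq' := Finset.mem_coe.mp hq
  have h1 : p.1 = q.1 := by
    ext k
    rw [← gA_neg_iff hp' k, ← gA_neg_iff hq' k, h]
  have h2 : p.2 = q.2 := by
    ext k
    rw [← gA_one_iff hp' k, ← gA_one_iff hq' k, h]
  exact Prod.ext h1 h2

lemma gB_injOn : Set.InjOn gB ↑rest17 := by
  intro j hj j' hj' h
  have hjv := (mem_rest17 j).mp (Finset.mem_coe.mp hj)
  have e := congrFun h j
  simp only [gB, or_true, if_true] at e
  by_contra hc
  rw [if_neg (by push_neg; exact ⟨by omega, hc⟩)] at e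
  norm_num at e

lemma gC_injOn : Set.InjOn gC ↑rest17 := by
  intro j hj j' hj' h
  have hjv := (mem_rest17 j).mp (Finset.mem_coe.mp hj)
  have e := congrFun h j
  simp only [gC, or_true, if_true] at e
  by_contra hc
  rw [if_neg (by push_neg; exact ⟨by omega, hc⟩)] at e
  norm_num at e

lemma F2_card : F2.card = 16 := by
  rw [F2, Finset.card_image_of_injOn g2_injOn]
  decide

lemma zero_notin_mid4 : (0 : Fin 25) ∉ mid4 := by decide
lemma zero_lt_four : ((0 : Fin 25)).val < 4 := by decide

lemma gA_zero_cases {p : Finset (Fin 25) × Finset (Fin 25)} (hp : p ∈ IA) :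
    gA p 0 = -1 ∨ gA p 0 = 0 := by
  rw [IA, Finset.mem_filter, Finset.mem_product, Finset.mem_powerset, Finset.mem_powerset] at hp
  obtain ⟨⟨hN, hP⟩, _, _⟩ := hp
  have h2 : (0 : Fin 25) ∉ p.2 := fun hh => zero_notin_mid4 (hP hh)
  unfold gA
  rw [if_neg h2]
  by_cases h1 : (0 : Fin 25) ∈ p.1
  · left; rw [if_pos h1]
  · right; rw [if_neg h1]

lemma gB_zero {j : Fin 25} : gB j 0 = -(4/5) := by
  simp only [gB]
  rw [if_pos (Or.inl zero_lt_four)]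

lemma gC_zero {j : Fin 25} (hj : j ∈ rest17) : gC j 0 = -(1/5) := by
  have hjv := (mem_rest17 j).mp hj
  simp only [gC]
  rw [if_neg (by push_neg; refine ⟨by intro h; simp at h, ?_⟩; intro h; rw [← h] at hjv; simp at hjv)]

lemma F4_card : F4.card = 70 := by
  have cA : (IA.image gA).card = 36 := by
    rw [Finset.card_image_of_injOn gA_injOn]
    decide
  have cB : (rest17.image gB).card = 17 := by
    rw [Finset.card_image_of_injOn gB_injOn]
    decide
  have cC : (rest17.image gC).card = 17 := by
    rw [Finset.card_image_of_injOn gC_injOn]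
    decide
  have dAB : Disjoint (IA.image gA) (rest17.image gB) := by
    rw [Finset.disjoint_left]
    rintro u hA hB
    obtain ⟨p, hp, rfl⟩ := Finset.mem_image.mp hA
    obtain ⟨j, hj, hgj⟩ := Finset.mem_image.mp hB
    have h0 : gB j 0 = gA p 0 := by rw [hgj]
    rw [gB_zero] at h0
    rcases gA_zero_cases hp with h | h <;> rw [h] at h0 <;> norm_num at h0
  have dABC : Disjoint (IA.image gA ∪ rest17.image gB) (rest17.image gC) := by
    rw [Finset.disjoint_left]
    rintro u hAB hC
    obtain ⟨j, hj, hgj⟩ := Finset.mem_image.mp hC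
    rcases Finset.mem_union.mp hAB with h | h
    · obtain ⟨p, hp, rfl⟩ := Finset.mem_image.mp h
      have h0 : gC j 0 = gA p 0 := by rw [hgj]
      rw [gC_zero hj] at h0
      rcases gA_zero_cases hp with hh | hh <;> rw [hh] at h0 <;> norm_num at h0
    · obtain ⟨j', hj', rfl⟩ := Finset.mem_image.mp h
      have h0 : gC j 0 = gB j' 0 := by rw [hgj]
      rw [gC_zero hj, gB_zero] at h0
      norm_num at h0
  rw [F4, Finset.card_union_of_disjoint dABC, Finset.card_union_of_disjoint dAB, cA, cB, cC]

end NA24aux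

open NA24aux in
/-- In the Niemeier lattice `A_24` with `w = (1^4,-1^4,0^17)`, the
quantity `η(L,w) = 1 + |S_2^w| + (1/2)|S_4^w| = 1 + 16 + 35 = 52`, which is not
congruent to `0` modulo `8`. -/
theorem niemeierA24_eta :
    Nat.card (SA24 2) = 16 ∧
    Nat.card (SA24 4) = 70 ∧
    1 + Nat.card (SA24 2) + Nat.card (SA24 4) / 2 = 52 ∧
    ¬ (52 % 8 = 0) := by
  have h2 : Nat.card (SA24 2) = 16 := by
    rw [S2_eq, Nat.card_coe_set_eq, Set.ncard_coe_finset, F2_card]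
  have h4 : Nat.card (SA24 4) = 70 := by
    rw [S4_eq, Nat.card_coe_set_eq, Set.ncard_coe_finset, F4_card]
  exact ⟨h2, h4, by rw [h2, h4], by norm_num⟩
end
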